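/- Let K ≥ 2 and let v ∈ ℝ^K satisfy v_k ≠ v̄ for every k ∈ {1,…,K}, where v̄ = (1/K) Σ_{i=1}^K v_i. Then for all i, j ∈ {1,…,K}, the limit as ε → 0⁺ of ∂(log EvSoftmax_{train,ε}(v)_i)/∂v_j equals δ_{ij} − EvSoftmax(v)_j; that is, lim_{ε→0⁺} ∇_v log EvSoftmax_{train,ε}(v)_i = δ_i − EvSoftmax(v), where δ_i ∈ ℝ^K is the standard basis vector and δ_{ij} is the Kronecker delta. -/

import Mathlib

open Finset Filter

/-- The ev-softmax function:
`EvSoftmax(v)_k = 𝟙{v_k ≥ v̄} e^{v_k} / ∑_l 𝟙{v_l ≥ v̄} e^{v_l}`,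
where `v̄` is the arithmetic mean of `v`. -/
noncomputable def evSoftmax {K : ℕ} (v : Fin K → ℝ) (k : Fin K) : ℝ :=
  (if (∑ i : Fin K, v i) / K ≤ v k then Real.exp (v k) else 0) /
    ∑ l : Fin K, (if (∑ i : Fin K, v i) / K ≤ v l then Real.exp (v l) else 0)

/-- The training-time modification of ev-softmax. -/
noncomputable def evSoftmaxTrain {K : ℕ} (ε : ℝ) (v : Fin K → ℝ) (k : Fin K) : ℝ :=
  (((if (∑ i : Fin K, v i) / K ≤ v k then (1 : ℝ) else 0) + ε) * Real.exp (v k)) /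
    ∑ l : Fin K, ((if (∑ i : Fin K, v i) / K ≤ v l then (1 : ℝ) else 0) + ε) * Real.exp (v l)

/-- For `K ≥ 2` and `v` with `v k ≠ v̄` for all `k`, the partial
derivatives of `log EvSoftmax_{train,ε}(v)_i` converge, as `ε → 0⁺`, to
`δ_{ij} - EvSoftmax(v)_j`. -/
theorem gradient_log_evSoftmaxTrain_tendsto
    (K : ℕ) (hK : 2 ≤ K) (v : Fin K → ℝ)
    (hne : ∀ k, v k ≠ (∑ i : Fin K, v i) / K) :
    ∀ i j : Fin K,
      Tendsto
        (fun ε : ℝ =>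
          fderiv ℝ (fun u : Fin K → ℝ => Real.log (evSoftmaxTrain ε u i)) v
            (Pi.single j 1))
        (nhdsWithin 0 (Set.Ioi 0))
        (nhds ((if i = j then (1 : ℝ) else 0) - evSoftmax v j)) := by
  intro i j
  haveI : Nonempty (Fin K) := ⟨⟨0, by omega⟩⟩
  have hKne : (K : ℝ) ≠ 0 := by positivity
  set M : ℝ := (∑ i : Fin K, v i) / K with hMdef
  set c : Fin K → ℝ := fun l => if M ≤ v l then (1 : ℝ) else 0 with hcdef
  have hc01 : ∀ l, 0 ≤ c l := by
    intro l; simp only [hcdef]; split <;> norm_num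
  -- there is some coordinate at least the mean
  have hex : ∃ l, M ≤ v l := by
    by_contra h
    push_neg at h
    have hlt : (∑ l : Fin K, v l) < ∑ _l : Fin K, M :=
      Finset.sum_lt_sum_of_nonempty Finset.univ_nonempty (fun l _ => h l)
    rw [Finset.sum_const, Finset.card_univ, Fintype.card_fin, nsmul_eq_mul] at hlt
    rw [hMdef] at hlt
    field_simp at hlt
    exact lt_irrefl _ hlt
  obtain ⟨l0, hl0⟩ := hex
  have hS0 : 0 < ∑ l, c l * Real.exp (v l) := by
    refine Finset.sum_pos' (fun l _ => mul_nonneg (hc01 l) (Real.exp_pos _).le)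
      ⟨l0, Finset.mem_univ _, ?_⟩
    simp only [hcdef, if_pos hl0, one_mul]
    exact Real.exp_pos _
  -- key: formula for the derivative for each positive ε
  have key : ∀ ε : ℝ, 0 < ε →
      fderiv ℝ (fun u : Fin K → ℝ => Real.log (evSoftmaxTrain ε u i)) v (Pi.single j 1)
        = (if i = j then (1 : ℝ) else 0)
            - (c j + ε) * Real.exp (v j) / ∑ l, (c l + ε) * Real.exp (v l) := by
    intro ε hε
    have hSε : 0 < ∑ l, (c l + ε) * Real.exp (v l) :=
      Finset.sum_pos (fun l _ => mul_pos (by linarith [hc01 l]) (Real.exp_pos _))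
        Finset.univ_nonempty
    have hciε : 0 < c i + ε := by linarith [hc01 i]
    -- eventual equality with a smooth function
    have hind : ∀ᶠ u : Fin K → ℝ in nhds v, ∀ k, ((∑ i, u i) / K ≤ u k) = (M ≤ v k) := by
      refine Filter.eventually_all.mpr ?_
      intro k
      have hcont : Continuous fun u : Fin K → ℝ => u k - (∑ i, u i) / K := by
        apply Continuous.sub (continuous_apply k)
        exact (continuous_finset_sum _ fun l _ => continuous_apply l).div_const _
      rcases lt_or_gt_of_ne (hne k) with hlt | hgt
      · -- v k < M : eventually u k < mean u
        have hval : (fun u : Fin K → ℝ => u k - (∑ i, u i) / K) v < 0 := by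
          simp only; rw [← hMdef]; linarith
        have := hcont.continuousAt (x := v) |>.eventually (eventually_lt_nhds hval)
        filter_upwards [this] with u hu
        simp only [eq_iff_iff]
        constructor
        · intro h; exact absurd h (by linarith)
        · intro h; exact absurd h (by rw [hMdef]; intro hh; linarith)
      · -- M < v k : eventually mean u < u k
        have hval : (0:ℝ) < (fun u : Fin K → ℝ => u k - (∑ i, u i) / K) v := by
          simp only; rw [← hMdef]; linarith
        have := hcont.continuousAt (x := v) |>.eventually (eventually_gt_nhds hval)
        filter_upwards [this] with u hu
        simp only [eq_iff_iff]
        constructor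
        · intro _; linarith
        · intro _; linarith
    have heq : (fun u : Fin K → ℝ => Real.log (evSoftmaxTrain ε u i))
        =ᶠ[nhds v] fun u : Fin K → ℝ =>
          Real.log (c i + ε) + u i - Real.log (∑ l, (c l + ε) * Real.exp (u l)) := by
      filter_upwards [hind] with u hu
      have hSu : 0 < ∑ l, (c l + ε) * Real.exp (u l) :=
        Finset.sum_pos (fun l _ => mul_pos (by linarith [hc01 l]) (Real.exp_pos _))
          Finset.univ_nonempty
      unfold evSoftmaxTrain
      simp only [hu, hcdef]
      rw [Real.log_div (by positivity) (by positivity), Real.log_mul (by positivity)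
        (Real.exp_pos _).ne', Real.log_exp]
    -- derivative of the smooth function
    have hsum : HasFDerivAt (fun u : Fin K → ℝ => ∑ l, (c l + ε) * Real.exp (u l))
        (∑ l, ((c l + ε) • (Real.exp (v l) •
          (ContinuousLinearMap.proj l : (Fin K → ℝ) →L[ℝ] ℝ)))) v := by
      apply HasFDerivAt.fun_sum
      intro l _
      exact ((hasFDerivAt_apply l v).exp).const_mul (c l + ε)
    have hlogsum := hsum.log hSε.ne'
    have hmain : HasFDerivAt (fun u : Fin K → ℝ =>
        Real.log (c i + ε) + u i - Real.log (∑ l, (c l + ε) * Real.exp (u l)))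
        (((0 : (Fin K → ℝ) →L[ℝ] ℝ) + ContinuousLinearMap.proj i)
          - (∑ l, (c l + ε) * Real.exp (v l))⁻¹ •
            (∑ l, ((c l + ε) • (Real.exp (v l) •
              (ContinuousLinearMap.proj l : (Fin K → ℝ) →L[ℝ] ℝ))))) v := by
      exact ((hasFDerivAt_const (Real.log (c i + ε)) v).add
        (hasFDerivAt_apply i v)).sub hlogsum
    rw [Filter.EventuallyEq.fderiv_eq heq, hmain.fderiv]
    simp only [ContinuousLinearMap.coe_sub', Pi.sub_apply, ContinuousLinearMap.add_apply,
      ContinuousLinearMap.zero_apply, ContinuousLinearMap.proj_apply,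
      ContinuousLinearMap.coe_smul', Pi.smul_apply, ContinuousLinearMap.coe_sum',
      Finset.sum_apply, smul_eq_mul, zero_add]
    have hsingle : ∀ l : Fin K, (Pi.single j 1 : Fin K → ℝ) l = if l = j then 1 else 0 := by
      intro l; simp [Pi.single_apply]
    rw [hsingle i]
    have hsum2 : (∑ l, (c l + ε) * (Real.exp (v l) * (Pi.single j 1 : Fin K → ℝ) l))
        = (c j + ε) * Real.exp (v j) := by
      rw [Finset.sum_eq_single j]
      · rw [hsingle j, if_pos rfl, mul_one]
      · intro l _ hl; rw [hsingle l, if_neg hl, mul_zero, mul_zero]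
      · intro h; exact absurd (Finset.mem_univ j) h
    rw [hsum2, inv_mul_eq_div]
  -- the limit of the explicit formula
  have hev : evSoftmax v j = c j * Real.exp (v j) / ∑ l, c l * Real.exp (v l) := by
    unfold evSoftmax
    rw [← hMdef]
    simp only [hcdef, ite_mul, one_mul, zero_mul]
  have hcont : ContinuousAt (fun ε : ℝ => (if i = j then (1:ℝ) else 0)
      - (c j + ε) * Real.exp (v j) / ∑ l, (c l + ε) * Real.exp (v l)) 0 := by
    apply ContinuousAt.sub continuousAt_const
    apply ContinuousAt.div
    · fun_prop
    · fun_prop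
    · simpa using hS0.ne'
  have hlim := hcont.tendsto.mono_left (nhdsWithin_le_nhds (s := Set.Ioi (0:ℝ)))
  refine Tendsto.congr' ?_ (by simpa [hev] using hlim)
  filter_upwards [self_mem_nhdsWithin] with ε hε
  exact (key ε hε).symm
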